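/- If at most one element per column of the p×p matrix X is constrained to zero, then in vectorized coordinates (Y = vec X, A = I ⊗ G) the matrix D = C*(A*A)^{-1}C is diagonal with entries (A*A)^{-1}_{jj} for the constrained indices j, and the constrained least-squares minimum satisfies δ² = δ_full² + Σ_j |Y_full(j)|² / ((A*A)^{-1})_{jj}. -/

import Mathlib

open Matrix Kronecker

open scoped ComplexOrder in
private lemma aux_inv_diag_ne {p : ℕ} (G : Matrix (Fin p) (Fin p) ℂ) (hG : IsUnit G)
    (j : Fin p) : (Gᴴ * G)⁻¹ j j ≠ 0 := by
  have hNpos : (Gᴴ * G).PosDef := by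
    refine Matrix.PosDef.of_dotProduct_mulVec_pos (Matrix.isHermitian_conjTranspose_mul_self G) fun x hx => ?_
    have hx' : G *ᵥ x ≠ 0 := by
      intro h0
      apply hx
      have h1 : G⁻¹ *ᵥ (G *ᵥ x) = x := by
        rw [Matrix.mulVec_mulVec,
          Matrix.nonsing_inv_mul _ ((Matrix.isUnit_iff_isUnit_det G).mp hG),
          Matrix.one_mulVec]
      rw [← h1, h0, Matrix.mulVec_zero]
    have he : star x ⬝ᵥ ((Gᴴ * G) *ᵥ x) = star (G *ᵥ x) ⬝ᵥ (G *ᵥ x) := by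
      rw [← Matrix.mulVec_mulVec, Matrix.dotProduct_mulVec, ← Matrix.star_mulVec]
    rw [he]
    have h1 : 0 ≤ star (G *ᵥ x) ⬝ᵥ (G *ᵥ x) :=
      Finset.sum_nonneg fun i _ => star_mul_self_nonneg _
    have h2 : star (G *ᵥ x) ⬝ᵥ (G *ᵥ x) ≠ 0 := fun h0 =>
      hx' (dotProduct_star_self_eq_zero.mp h0)
    exact lt_of_le_of_ne h1 (Ne.symm h2)
  have hNinvPos : ((Gᴴ * G)⁻¹).PosDef := hNpos.inv
  have hs : (Pi.single j 1 : Fin p → ℂ) ≠ 0 := by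
    intro h0
    simpa using congr_fun h0 j
  have hlt := hNinvPos.dotProduct_mulVec_pos hs
  have heval : star (Pi.single j 1 : Fin p → ℂ) ⬝ᵥ ((Gᴴ * G)⁻¹ *ᵥ Pi.single j 1)
      = (Gᴴ * G)⁻¹ j j := by
    rw [Matrix.mulVec_single]
    simp [dotProduct, Pi.single_apply, apply_ite (star : ℂ → ℂ), ite_mul]
  rw [heval] at hlt
  exact hlt.ne'

/-- with A = I ⊗ G and at most one constrained element per column
of X (the constrained vectorized indices have distinct first components),
D = C*(A*A)⁻¹C is diagonal with entries (A*A)⁻¹_{jj}, and the constrained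
least-squares minimum satisfies δ² = δ_full² + Σ_j |Y_full(j)|²/((A*A)⁻¹)_{jj}. -/
theorem stmt7 {p k : ℕ} (G : Matrix (Fin p) (Fin p) ℂ) (hG : IsUnit G)
    (b : Fin p × Fin p → ℂ) (f : Fin k → Fin p × Fin p)
    (hf : Function.Injective fun i => (f i).1) :
    let A := (1 : Matrix (Fin p) (Fin p) ℂ) ⊗ₖ G
    let C : Matrix (Fin p × Fin p) (Fin k) ℂ :=
      Matrix.of fun q j => if q = f j then 1 else 0
    let D : Matrix (Fin k) (Fin k) ℂ := Cᴴ * (Aᴴ * A)⁻¹ * C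
    let Yfull : Fin p × Fin p → ℂ := (Aᴴ * A)⁻¹.mulVec (Aᴴ.mulVec b)
    let obj : (Fin p × Fin p → ℂ) → ℝ := fun Y => ∑ q, ‖A.mulVec Y q - b q‖ ^ 2
    D = Matrix.diagonal (fun i => (Aᴴ * A)⁻¹ (f i) (f i)) ∧
    ∃ δ2 : ℝ,
      IsLeast {r : ℝ | ∃ Y : Fin p × Fin p → ℂ, (∀ i, Y (f i) = 0) ∧ r = obj Y} δ2 ∧
      (δ2 : ℂ) = (obj Yfull : ℂ) +
        ∑ i, (‖Yfull (f i)‖ ^ 2 : ℂ) / (Aᴴ * A)⁻¹ (f i) (f i) := by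
  intro A C D Yfull obj
  have hAdef : A = (1 : Matrix (Fin p) (Fin p) ℂ) ⊗ₖ G := rfl
  have hCdef : ∀ q j, C q j = if q = f j then 1 else 0 := fun _ _ => rfl
  have hobjdef : ∀ Y, obj Y = ∑ q, ‖A.mulVec Y q - b q‖ ^ 2 := fun _ => rfl
  have hfinj : Function.Injective f := fun i j h => hf (congrArg Prod.fst h)
  have hGdet : G.det ≠ 0 := by
    have := (Matrix.isUnit_iff_isUnit_det G).mp hG
    simpa [isUnit_iff_ne_zero] using this
  set N : Matrix (Fin p) (Fin p) ℂ := Gᴴ * G with hN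
  have hNdet : N.det ≠ 0 := by
    simp [hN, Matrix.det_mul, Matrix.det_conjTranspose, hGdet, star_eq_zero]
  have hAH : Aᴴ = (1 : Matrix (Fin p) (Fin p) ℂ) ⊗ₖ Gᴴ := by
    ext q r
    simp [hAdef, Matrix.conjTranspose_apply, Matrix.one_apply,
      apply_ite (star : ℂ → ℂ), eq_comm]
  have hM : Aᴴ * A = (1 : Matrix (Fin p) (Fin p) ℂ) ⊗ₖ N := by
    rw [hAH, hAdef, ← Matrix.mul_kronecker_mul, Matrix.one_mul, hN]
  have h1inv : (1 : Matrix (Fin p) (Fin p) ℂ)⁻¹ = 1 :=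
    Matrix.inv_eq_right_inv (Matrix.mul_one 1)
  have hMinv : (Aᴴ * A)⁻¹ = (1 : Matrix (Fin p) (Fin p) ℂ) ⊗ₖ N⁻¹ := by
    rw [hM, Matrix.inv_kronecker, h1inv]
  have hMdet : IsUnit (Aᴴ * A).det := by
    rw [hM, Matrix.det_kronecker, Matrix.det_one, one_pow, one_mul]
    exact isUnit_iff_ne_zero.mpr (pow_ne_zero _ hNdet)
  have hblock : ∀ q r : Fin p × Fin p, q.1 ≠ r.1 → (Aᴴ * A)⁻¹ q r = 0 := by
    intro q r h
    rw [hMinv]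
    simp [Matrix.one_apply, h]
  have hd_eq : ∀ i, (Aᴴ * A)⁻¹ (f i) (f i) = N⁻¹ (f i).2 (f i).2 := by
    intro i
    rw [hMinv]
    simp [Matrix.one_apply]
  have hd_ne : ∀ i, (Aᴴ * A)⁻¹ (f i) (f i) ≠ 0 := by
    intro i
    rw [hd_eq i, hN]
    exact aux_inv_diag_ne G hG _
  -- dot products with C
  have hCw : ∀ (w : Fin k → ℂ) q, (C *ᵥ w) q = ∑ j, if q = f j then w j else 0 := by
    intro w q
    simp [Matrix.mulVec, dotProduct, hCdef, ite_mul]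
  have hdotC : ∀ (x : Fin p × Fin p → ℂ) (w : Fin k → ℂ),
      star x ⬝ᵥ (C *ᵥ w) = ∑ j, star (x (f j)) * w j := by
    intro x w
    simp only [dotProduct, hCw, Finset.mul_sum, mul_ite, mul_zero, Pi.star_apply]
    rw [Finset.sum_comm]
    refine Finset.sum_congr rfl fun j _ => ?_
    rw [Finset.sum_ite_eq' Finset.univ (f j) (fun q => star (x q) * w j)]
    simp
  have hkey : ∀ (w : Fin k → ℂ) i,
      ((Aᴴ * A)⁻¹ *ᵥ (C *ᵥ w)) (f i) = (Aᴴ * A)⁻¹ (f i) (f i) * w i := by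
    intro w i
    have h1 : ((Aᴴ * A)⁻¹ *ᵥ (C *ᵥ w)) (f i)
        = ∑ q, (Aᴴ * A)⁻¹ (f i) q * (C *ᵥ w) q := rfl
    rw [h1]
    simp only [hCw, Finset.mul_sum, mul_ite, mul_zero]
    rw [Finset.sum_comm]
    have h2 : ∀ j, (∑ q, if q = f j then (Aᴴ * A)⁻¹ (f i) q * w j else 0)
        = (Aᴴ * A)⁻¹ (f i) (f j) * w j := by
      intro j
      rw [Finset.sum_ite_eq' Finset.univ (f j) (fun q => (Aᴴ * A)⁻¹ (f i) q * w j)]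
      simp
    rw [Finset.sum_congr rfl fun j _ => h2 j]
    rw [Finset.sum_eq_single i]
    · intro j _ hj
      have hne : (f i).1 ≠ (f j).1 := fun h => hj (hf h).symm
      rw [hblock _ _ hne, zero_mul]
    · intro h; exact absurd (Finset.mem_univ i) h
  -- Part 1 : D is diagonal
  have hD : ∀ i j, D i j = (Aᴴ * A)⁻¹ (f i) (f j) := by
    intro i j
    have h0 : D i j = ∑ q, star (C q i) * ((Aᴴ * A)⁻¹ * C) q j := by
      show (Cᴴ * (Aᴴ * A)⁻¹ * C) i j = _
      rw [Matrix.mul_assoc, Matrix.mul_apply]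
      exact Finset.sum_congr rfl fun q _ => rfl
    rw [h0]
    have hCC : ∀ q, ((Aᴴ * A)⁻¹ * C) q j = (Aᴴ * A)⁻¹ q (f j) := by
      intro q
      rw [Matrix.mul_apply]
      rw [Finset.sum_congr rfl fun r _ => by rw [hCdef r j, mul_ite, mul_one, mul_zero]]
      rw [Finset.sum_ite_eq' Finset.univ (f j) (fun r => (Aᴴ * A)⁻¹ q r)]
      simp
    rw [Finset.sum_congr rfl fun q _ => by
      rw [hCC q, hCdef q i, apply_ite (star : ℂ → ℂ), star_one, star_zero, ite_mul,
        one_mul, zero_mul]]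
    rw [Finset.sum_ite_eq' Finset.univ (f i) (fun q => (Aᴴ * A)⁻¹ q (f j))]
    simp
  have part1 : D = Matrix.diagonal (fun i => (Aᴴ * A)⁻¹ (f i) (f i)) := by
    ext i j
    by_cases h : i = j
    · subst h; rw [hD]; simp
    · rw [hD, Matrix.diagonal_apply_ne _ h]
      exact hblock _ _ fun hh => h (hf hh)
  refine ⟨part1, ?_⟩
  -- Part 2 : constrained least squares
  set w : Fin k → ℂ := fun i => Yfull (f i) / (Aᴴ * A)⁻¹ (f i) (f i) with hw
  set z : Fin p × Fin p → ℂ := (Aᴴ * A)⁻¹ *ᵥ (C *ᵥ w) with hz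
  set Ystar : Fin p × Fin p → ℂ := Yfull - z with hYstar
  have hzf : ∀ i, z (f i) = Yfull (f i) := by
    intro i
    rw [hz, hkey, hw]
    exact mul_div_cancel₀ _ (hd_ne i)
  have hYstar0 : ∀ i, Ystar (f i) = 0 := by
    intro i
    rw [hYstar, Pi.sub_apply, hzf, sub_self]
  have hMM : ∀ v : Fin p × Fin p → ℂ, (Aᴴ * A) *ᵥ ((Aᴴ * A)⁻¹ *ᵥ v) = v := by
    intro v
    rw [Matrix.mulVec_mulVec, Matrix.mul_nonsing_inv _ hMdet, Matrix.one_mulVec]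
  have hMz : (Aᴴ * A) *ᵥ z = C *ᵥ w := hMM _
  have hMYfull : (Aᴴ * A) *ᵥ Yfull = Aᴴ *ᵥ b := hMM _
  have hAHe0 : Aᴴ *ᵥ (A *ᵥ Yfull - b) = 0 := by
    rw [Matrix.mulVec_sub, Matrix.mulVec_mulVec, hMYfull, sub_self]
  have hAHv : Aᴴ *ᵥ (A *ᵥ Ystar - b) = -(C *ᵥ w) := by
    have hd : A *ᵥ Ystar - b = (A *ᵥ Yfull - b) - A *ᵥ z := by
      rw [hYstar, Matrix.mulVec_sub A Yfull z]; abel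
    rw [hd, Matrix.mulVec_sub, hAHe0, Matrix.mulVec_mulVec, hMz, zero_sub]
  -- bridge between real objective and complex dot product
  have hnorm : ∀ u : Fin p × Fin p → ℂ,
      star u ⬝ᵥ u = ((∑ q, ‖u q‖ ^ 2 : ℝ) : ℂ) := by
    intro u
    have h1 : ∀ q, star (u q) * u q = ((‖u q‖ ^ 2 : ℝ) : ℂ) := by
      intro q
      rw [RCLike.star_def, RCLike.conj_mul]
      norm_cast
    calc star u ⬝ᵥ u = ∑ q, star (u q) * u q := rfl
      _ = ∑ q, ((‖u q‖ ^ 2 : ℝ) : ℂ) := Finset.sum_congr rfl fun q _ => h1 q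
      _ = ((∑ q, ‖u q‖ ^ 2 : ℝ) : ℂ) := by push_cast; ring
  have hobjC : ∀ Y, ((obj Y : ℝ) : ℂ) = star (A *ᵥ Y - b) ⬝ᵥ (A *ᵥ Y - b) := by
    intro Y
    rw [hnorm, hobjdef]
    norm_cast
  have hsq : ∀ u h : Fin p × Fin p → ℂ,
      star (u + h) ⬝ᵥ (u + h)
        = star u ⬝ᵥ u + (star u ⬝ᵥ h + star h ⬝ᵥ u) + star h ⬝ᵥ h := by
    intro u h
    rw [star_add, add_dotProduct, dotProduct_add, dotProduct_add]
    ring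
  -- the key identity for feasible Y
  have hident : ∀ Y : Fin p × Fin p → ℂ, (∀ i, Y (f i) = 0) →
      obj Y = obj Ystar + ∑ q, ‖(A *ᵥ (Y - Ystar)) q‖ ^ 2 := by
    intro Y hY
    have hdec : A *ᵥ Y - b = (A *ᵥ Ystar - b) + A *ᵥ (Y - Ystar) := by
      rw [Matrix.mulVec_sub A Y Ystar]; abel
    have hcross1 : star (A *ᵥ (Y - Ystar)) ⬝ᵥ (A *ᵥ Ystar - b) = 0 := by
      rw [Matrix.star_mulVec, ← Matrix.dotProduct_mulVec, hAHv, dotProduct_neg,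
        hdotC]
      have : ∀ j, star ((Y - Ystar) (f j)) * w j = 0 := by
        intro j
        rw [Pi.sub_apply, hY, hYstar0, sub_zero, star_zero, zero_mul]
      rw [Finset.sum_congr rfl fun j _ => this j]
      simp
    have hcross2 : star (A *ᵥ Ystar - b) ⬝ᵥ (A *ᵥ (Y - Ystar)) = 0 := by
      rw [Matrix.star_dotProduct, hcross1, star_zero]
    have hc : ((obj Y : ℝ) : ℂ) = ((obj Ystar : ℝ) : ℂ)
        + ((∑ q, ‖(A *ᵥ (Y - Ystar)) q‖ ^ 2 : ℝ) : ℂ) := by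
      rw [hobjC Y, hdec, hsq, hcross1, hcross2, ← hobjC Ystar, hnorm]
      ring
    exact_mod_cast hc
  refine ⟨obj Ystar, ⟨⟨Ystar, hYstar0, rfl⟩, ?_⟩, ?_⟩
  · rintro r ⟨Y, hY, rfl⟩
    rw [hident Y hY]
    have : 0 ≤ ∑ q, ‖(A *ᵥ (Y - Ystar)) q‖ ^ 2 :=
      Finset.sum_nonneg fun q _ => sq_nonneg _
    linarith
  · -- value of the minimum
    have hdec2 : A *ᵥ Ystar - b = (A *ᵥ Yfull - b) + (-(A *ᵥ z)) := by
      rw [hYstar, Matrix.mulVec_sub A Yfull z]; abel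
    have hgz : star (A *ᵥ z) ⬝ᵥ (A *ᵥ Yfull - b) = 0 := by
      rw [Matrix.star_mulVec, ← Matrix.dotProduct_mulVec, hAHe0, dotProduct_zero]
    have hcross1 : star (A *ᵥ Yfull - b) ⬝ᵥ (-(A *ᵥ z)) = 0 := by
      rw [dotProduct_neg, Matrix.star_dotProduct, hgz, star_zero, neg_zero]
    have hcross2 : star (-(A *ᵥ z)) ⬝ᵥ (A *ᵥ Yfull - b) = 0 := by
      rw [star_neg, neg_dotProduct, hgz, neg_zero]
    have hlast : star (-(A *ᵥ z)) ⬝ᵥ (-(A *ᵥ z))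
        = ∑ i, (‖Yfull (f i)‖ ^ 2 : ℂ) / (Aᴴ * A)⁻¹ (f i) (f i) := by
      rw [star_neg, neg_dotProduct, dotProduct_neg, neg_neg]
      rw [Matrix.star_mulVec, ← Matrix.dotProduct_mulVec, Matrix.mulVec_mulVec, hMz, hdotC]
      refine Finset.sum_congr rfl fun i _ => ?_
      have hwi : w i = Yfull (f i) / (Aᴴ * A)⁻¹ (f i) (f i) := rfl
      rw [hzf, hwi]
      rw [div_eq_mul_inv, ← mul_assoc, RCLike.star_def, RCLike.conj_mul, div_eq_mul_inv]
      norm_cast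
    have hc : ((obj Ystar : ℝ) : ℂ)
        = ((obj Yfull : ℝ) : ℂ) + ∑ i, (‖Yfull (f i)‖ ^ 2 : ℂ) / (Aᴴ * A)⁻¹ (f i) (f i) := by
      rw [hobjC Ystar, hdec2, hsq, hcross1, hcross2, hlast, ← hobjC Yfull]
      ring
    exact hc
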